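/- If α = α_{i,r} is an indecomposable with i odd and 1 ≤ r ≤ u_{i+2} - 1, then N(α) > (1 - 1/u_{i+2}) √Δ. -/

import Mathlib

open Real Filter

noncomputable def omg (D : ℕ) : ℝ := if D % 4 = 1 then (1 + Real.sqrt D) / 2 else Real.sqrt D

noncomputable def omgc (D : ℕ) : ℝ := if D % 4 = 1 then (1 - Real.sqrt D) / 2 else -Real.sqrt D

noncomputable def sigmaD (D : ℕ) : ℝ := omg D + (⌊-omgc D⌋ : ℤ)

noncomputable def gam (D : ℕ) : ℕ → ℝ
  | 0 => sigmaD D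
  | n + 1 => 1 / (gam D n - ⌊gam D n⌋)

/-- partial quotients of the continued fraction of σ_D -/
noncomputable def uD (D : ℕ) (n : ℕ) : ℤ := ⌊gam D n⌋

noncomputable def emb1 (D : ℕ) (x : ℤ × ℤ) : ℝ := (x.1 : ℝ) + (x.2 : ℝ) * omg D

noncomputable def emb2 (D : ℕ) (x : ℤ × ℤ) : ℝ := (x.1 : ℝ) + (x.2 : ℝ) * omgc D

def conjp (D : ℕ) (x : ℤ × ℤ) : ℤ × ℤ := if D % 4 = 1 then (x.1 + x.2, -x.2) else (x.1, -x.2)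

def TotPos (D : ℕ) (x : ℤ × ℤ) : Prop := 0 < emb1 D x ∧ 0 < emb2 D x

def Indec (D : ℕ) (x : ℤ × ℤ) : Prop :=
  TotPos D x ∧ ¬ ∃ y z : ℤ × ℤ, TotPos D y ∧ TotPos D z ∧ x = y + z

noncomputable def Nm (D : ℕ) (x : ℤ × ℤ) : ℝ := emb1 D x * emb2 D x

noncomputable def disc (D : ℕ) : ℝ := if D % 4 = 1 then (D : ℝ) else 4 * (D : ℝ)

def UniqDec (D : ℕ) (x : ℤ × ℤ) : Prop :=
  ∃! m : Multiset (ℤ × ℤ), (∀ y ∈ m, Indec D y) ∧ m.sum = x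

/-- first real embedding of α_i = p_i - q_i ω_D' -/
noncomputable def ar (D : ℕ) (p q : ℤ → ℤ) (i : ℤ) : ℝ := (p i : ℝ) - (q i : ℝ) * omgc D

/-- second real embedding (Galois conjugate) of α_i -/
noncomputable def ac (D : ℕ) (p q : ℤ → ℤ) (i : ℤ) : ℝ := (p i : ℝ) - (q i : ℝ) * omg D

/-- first embedding of the semiconvergent α_{i,r} = α_i + r α_{i+1} -/
noncomputable def ar2 (D : ℕ) (p q : ℤ → ℤ) (i r : ℤ) : ℝ := ar D p q i + (r : ℝ) * ar D p q (i + 1)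

/-- conjugate embedding of the semiconvergent α_{i,r} -/
noncomputable def ac2 (D : ℕ) (p q : ℤ → ℤ) (i r : ℤ) : ℝ := ac D p q i + (r : ℝ) * ac D p q (i + 1)

/-- N_i = |N(α_i)| -/
noncomputable def Ni (D : ℕ) (p q : ℤ → ℤ) (i : ℤ) : ℝ := |ar D p q i * ac D p q i|

section Aux

variable {D : ℕ}

lemma irr_sqrtD (hD2 : 2 ≤ D) (hsq : Squarefree D) : Irrational (Real.sqrt D) := by
  rw [irrational_sqrt_natCast_iff]
  rintro ⟨k, hk⟩
  have hk1 : IsUnit k := hsq k (by rw [hk])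
  have h1 : k = 1 := Nat.isUnit_iff.1 hk1
  rw [h1] at hk
  omega

lemma irr_omg (hD2 : 2 ≤ D) (hsq : Squarefree D) : Irrational (omg D) := by
  have h := irr_sqrtD hD2 hsq
  unfold omg
  split
  · rintro ⟨y, hy⟩
    exact h ⟨2*y - 1, by push_cast; nlinarith [hy]⟩
  · exact h

lemma irr_gam (hD2 : 2 ≤ D) (hsq : Squarefree D) : ∀ n, Irrational (gam D n) := by
  intro n
  induction n with
  | zero =>
    show Irrational (sigmaD D)
    exact (irr_omg hD2 hsq).add_intCast _
  | succ n ih =>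
    show Irrational (1 / (gam D n - ⌊gam D n⌋))
    rw [one_div]
    exact (ih.sub_intCast _).inv

lemma gam_succ (n : ℕ) : gam D (n + 1) = 1 / (gam D n - ⌊gam D n⌋) := rfl

lemma frac_pos (hD2 : 2 ≤ D) (hsq : Squarefree D) (n : ℕ) :
    0 < gam D n - ⌊gam D n⌋ ∧ gam D n - ⌊gam D n⌋ < 1 := by
  have h1 : (⌊gam D n⌋ : ℝ) ≤ gam D n := Int.floor_le _
  have h2 : gam D n < ⌊gam D n⌋ + 1 := Int.lt_floor_add_one _
  have h3 : gam D n ≠ (⌊gam D n⌋ : ℝ) := (irr_gam hD2 hsq n).ne_int _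
  constructor <;> [skip; linarith]
  rcases lt_or_eq_of_le h1 with h | h
  · linarith
  · exact absurd h.symm h3

lemma gam_gt_one (hD2 : 2 ≤ D) (hsq : Squarefree D) (n : ℕ) : 1 < gam D (n + 1) := by
  rw [gam_succ]
  obtain ⟨h0, h1⟩ := frac_pos hD2 hsq n
  exact one_lt_one_div h0 h1

lemma uD_one_le (hD2 : 2 ≤ D) (hsq : Squarefree D) (n : ℕ) : 1 ≤ uD D (n + 1) := by
  have := gam_gt_one hD2 hsq n
  unfold uD
  exact Int.le_floor.2 (by push_cast; linarith)

lemma gam_gt_uD (hD2 : 2 ≤ D) (hsq : Squarefree D) (n : ℕ) :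
    (uD D n : ℝ) < gam D n := by
  have h1 : (⌊gam D n⌋ : ℝ) ≤ gam D n := Int.floor_le _
  have h3 : gam D n ≠ (⌊gam D n⌋ : ℝ) := (irr_gam hD2 hsq n).ne_int _
  unfold uD
  rcases lt_or_eq_of_le h1 with h | h
  · exact h
  · exact absurd h.symm h3

lemma gam_rel (hD2 : 2 ≤ D) (hsq : Squarefree D) (n : ℕ) :
    gam D n - uD D n = 1 / gam D (n + 1) := by
  have h := (frac_pos hD2 hsq n).1
  rw [gam_succ, one_div_one_div]
  rfl

end Aux

section Aux2

variable {D : ℕ} (p q : ℤ → ℤ)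

lemma base_facts (hD2 : 2 ≤ D) (hsq : Squarefree D) :
    (⌈(uD D 0 : ℚ) / 2⌉ : ℤ) = ⌊omg D⌋ ∧
      sigmaD D - (⌊sigmaD D⌋ : ℝ) = omg D - (⌊omg D⌋ : ℝ) := by
  set a : ℤ := ⌊omg D⌋ with ha
  set b : ℤ := ⌊-omgc D⌋ with hb
  have hfs : ⌊sigmaD D⌋ = a + b := by
    unfold sigmaD; rw [Int.floor_add_intCast]
  have hu0 : uD D 0 = a + b := by
    show ⌊gam D 0⌋ = a + b
    show ⌊sigmaD D⌋ = a + b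
    exact hfs
  have hσ : sigmaD D - (⌊sigmaD D⌋ : ℝ) = omg D - (⌊omg D⌋ : ℝ) := by
    rw [hfs]; unfold sigmaD; push_cast; ring
  refine ⟨?_, hσ⟩
  by_cases h4 : D % 4 = 1
  · have hrel : omg D = -omgc D + 1 := by
      unfold omg omgc; rw [if_pos h4, if_pos h4]; ring
    have hab : a = b + 1 := by
      rw [ha, hrel, Int.floor_add_one]
    have : ((uD D 0 : ℚ)) / 2 = (a : ℚ) - 1/2 := by
      rw [hu0, hab]; push_cast; ring
    rw [this, show (a : ℚ) - 1/2 = (-1/2 : ℚ) + a by ring, Int.ceil_add_intCast]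
    norm_num
  · have hrel : omg D = -omgc D := by
      unfold omg omgc; rw [if_neg h4, if_neg h4]; ring
    have hab : a = b := by rw [ha, hrel]
    have : ((uD D 0 : ℚ)) / 2 = (a : ℚ) := by
      rw [hu0, ← hab]; push_cast; ring
    rw [this, Int.ceil_intCast]

lemma acE (hD2 : 2 ≤ D) (hsq : Squarefree D)
    (hpm1 : p (-1) = 1) (hqm1 : q (-1) = 0)
    (hp0 : p 0 = ⌈(uD D 0 : ℚ) / 2⌉) (hq0 : q 0 = 1)
    (hprec : ∀ i : ℤ, -1 ≤ i → p (i + 2) = uD D (i + 2).toNat * p (i + 1) + p i)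
    (hqrec : ∀ i : ℤ, -1 ≤ i → q (i + 2) = uD D (i + 2).toNat * q (i + 1) + q i) :
    ∀ n : ℕ, ac D p q ((n : ℤ) - 1) = -(gam D (n + 1)) * ac D p q (n : ℤ) := by
  intro n
  induction n with
  | zero =>
    obtain ⟨hc, hσ⟩ := base_facts hD2 hsq
    have hE0 : ac D p q ((0 : ℤ) - 1) = 1 := by
      show ac D p q (-1) = 1
      unfold ac; rw [hpm1, hqm1]; norm_num
    have hE1 : ac D p q (0 : ℤ) = (⌊omg D⌋ : ℝ) - omg D := by
      unfold ac; rw [hp0, hc, hq0]; push_cast; ring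
    have hfr : 0 < gam D 0 - (⌊gam D 0⌋ : ℝ) := (frac_pos hD2 hsq 0).1
    have hg0 : gam D 0 - (⌊gam D 0⌋ : ℝ) = omg D - (⌊omg D⌋ : ℝ) := hσ
    have hne : omg D - (⌊omg D⌋ : ℝ) ≠ 0 := by rw [← hg0]; linarith
    simp only [Nat.cast_zero]
    rw [hE0, hE1, gam_succ]
    rw [hg0]
    field_simp
    ring
  | succ n ih =>
    have e1 : ((n + 1 : ℕ) : ℤ) - 1 = (n : ℤ) := by push_cast; ring
    have e2 : ((n : ℤ) - 1) + 2 = (n : ℤ) + 1 := by ring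
    have e3 : ((n : ℤ) + 1).toNat = n + 1 := by omega
    have hp := hprec ((n : ℤ) - 1) (by omega)
    have hq := hqrec ((n : ℤ) - 1) (by omega)
    rw [e2, e3] at hp hq
    have hrec : ac D p q ((n : ℤ) + 1)
        = (uD D (n + 1) : ℝ) * ac D p q (n : ℤ) + ac D p q ((n : ℤ) - 1) := by
      unfold ac
      rw [hp, hq, show ((n : ℤ) - 1) + 1 = (n : ℤ) by ring]
      push_cast; ring
    have hgpos1 : (0 : ℝ) < gam D (n + 1) := lt_trans one_pos (gam_gt_one hD2 hsq n)
    have hgpos2 : (0 : ℝ) < gam D (n + 2) := lt_trans one_pos (gam_gt_one hD2 hsq (n + 1))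
    have hrel : gam D (n + 1) - (uD D (n + 1) : ℝ) = 1 / gam D (n + 2) :=
      gam_rel hD2 hsq (n + 1)
    rw [show ((n + 1 : ℕ) : ℤ) - 1 = (n : ℤ) by push_cast; ring,
      show ((n + 1 : ℕ) : ℤ) = (n : ℤ) + 1 by push_cast; ring]
    rw [hrec, ih]
    have hu : (uD D (n + 1) : ℝ) = gam D (n + 1) - 1 / gam D (n + 2) := by linarith
    rw [hu]
    field_simp
    ring

end Aux2

section Aux3

variable {D : ℕ} (p q : ℤ → ℤ)

lemma ac_sign (hD2 : 2 ≤ D) (hsq : Squarefree D)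
    (hpm1 : p (-1) = 1) (hqm1 : q (-1) = 0)
    (hp0 : p 0 = ⌈(uD D 0 : ℚ) / 2⌉) (hq0 : q 0 = 1)
    (hprec : ∀ i : ℤ, -1 ≤ i → p (i + 2) = uD D (i + 2).toNat * p (i + 1) + p i)
    (hqrec : ∀ i : ℤ, -1 ≤ i → q (i + 2) = uD D (i + 2).toNat * q (i + 1) + q i) :
    ∀ n : ℕ, 0 < (-1 : ℝ) ^ n * ac D p q ((n : ℤ) - 1) := by
  intro n
  induction n with
  | zero =>
    have hE0 : ac D p q ((0 : ℕ) - 1 : ℤ) = 1 := by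
      show ac D p q (0 - 1) = 1
      unfold ac
      rw [show (0 : ℤ) - 1 = -1 by ring, hpm1, hqm1]
      norm_num
    rw [hE0]; norm_num
  | succ n ih =>
    have hE := acE p q hD2 hsq hpm1 hqm1 hp0 hq0 hprec hqrec n
    have hg : (0 : ℝ) < gam D (n + 1) := lt_trans one_pos (gam_gt_one hD2 hsq n)
    have hkey : ac D p q (n : ℤ) = -ac D p q ((n : ℤ) - 1) / gam D (n + 1) := by
      rw [hE]; field_simp
    rw [show ((n + 1 : ℕ) : ℤ) - 1 = (n : ℤ) by push_cast; ring, hkey]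
    rw [pow_succ]
    have h2 : 0 < ((-1 : ℝ) ^ n * ac D p q ((n : ℤ) - 1)) / gam D (n + 1) :=
      div_pos ih hg
    calc (0:ℝ) < ((-1 : ℝ) ^ n * ac D p q ((n : ℤ) - 1)) / gam D (n + 1) := h2
      _ = (-1 : ℝ) ^ n * -1 * (-ac D p q ((n : ℤ) - 1) / gam D (n + 1)) := by ring

lemma detpq (hpm1 : p (-1) = 1) (hqm1 : q (-1) = 0)
    (hq0 : q 0 = 1)
    (hprec : ∀ i : ℤ, -1 ≤ i → p (i + 2) = uD D (i + 2).toNat * p (i + 1) + p i)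
    (hqrec : ∀ i : ℤ, -1 ≤ i → q (i + 2) = uD D (i + 2).toNat * q (i + 1) + q i) :
    ∀ n : ℕ, q (n : ℤ) * p ((n : ℤ) - 1) - q ((n : ℤ) - 1) * p (n : ℤ) = (-1) ^ n := by
  intro n
  induction n with
  | zero =>
    rw [show ((0 : ℕ) : ℤ) - 1 = -1 by norm_num]
    norm_num [hpm1, hqm1, hq0]
  | succ n ih =>
    have e2 : ((n : ℤ) - 1) + 2 = (n : ℤ) + 1 := by ring
    have e3 : ((n : ℤ) + 1).toNat = n + 1 := by omega
    have hp := hprec ((n : ℤ) - 1) (by omega)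
    have hq := hqrec ((n : ℤ) - 1) (by omega)
    rw [e2, e3, show ((n : ℤ) - 1) + 1 = (n : ℤ) by ring] at hp hq
    rw [show ((n + 1 : ℕ) : ℤ) - 1 = (n : ℤ) by push_cast; ring,
      show ((n + 1 : ℕ) : ℤ) = (n : ℤ) + 1 by push_cast; ring, hp, hq, pow_succ]
    linear_combination (-1 : ℤ) * ih

lemma q_pos (hD2 : 2 ≤ D) (hsq : Squarefree D)
    (hqm1 : q (-1) = 0) (hq0 : q 0 = 1)
    (hqrec : ∀ i : ℤ, -1 ≤ i → q (i + 2) = uD D (i + 2).toNat * q (i + 1) + q i) :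
    ∀ n : ℕ, 0 ≤ q ((n : ℤ) - 1) ∧ 1 ≤ q (n : ℤ) := by
  intro n
  induction n with
  | zero =>
    constructor
    · rw [show ((0 : ℕ) : ℤ) - 1 = -1 by norm_num, hqm1]
    · rw [show ((0 : ℕ) : ℤ) = 0 by norm_num, hq0]
  | succ n ih =>
    have e2 : ((n : ℤ) - 1) + 2 = (n : ℤ) + 1 := by ring
    have e3 : ((n : ℤ) + 1).toNat = n + 1 := by omega
    have hq := hqrec ((n : ℤ) - 1) (by omega)
    rw [e2, e3, show ((n : ℤ) - 1) + 1 = (n : ℤ) by ring] at hq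
    have hu := uD_one_le hD2 hsq n
    obtain ⟨h1, h2⟩ := ih
    constructor
    · rw [show ((n + 1 : ℕ) : ℤ) - 1 = (n : ℤ) by push_cast; ring]; omega
    · rw [show ((n + 1 : ℕ) : ℤ) = (n : ℤ) + 1 by push_cast; ring, hq]
      nlinarith

lemma sqrt_disc_pos (hD2 : 2 ≤ D) : 0 < Real.sqrt (disc D) := by
  apply Real.sqrt_pos.2
  unfold disc
  have : (2 : ℝ) ≤ (D : ℝ) := by exact_mod_cast hD2
  split <;> linarith

lemma ar_eq_ac (hD2 : 2 ≤ D) (j : ℤ) :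
    ar D p q j = ac D p q j + (q j : ℝ) * Real.sqrt (disc D) := by
  unfold ar ac omg omgc disc
  by_cases h4 : D % 4 = 1
  · rw [if_pos h4, if_pos h4, if_pos h4]; ring
  · rw [if_neg h4, if_neg h4, if_neg h4]
    have h4' : Real.sqrt (4 * (D : ℝ)) = 2 * Real.sqrt D := by
      rw [show (4 : ℝ) * (D : ℝ) = (2 * Real.sqrt D) ^ 2 by
        rw [mul_pow, Real.sq_sqrt (by positivity)]; norm_num]
      rw [Real.sqrt_sq (by positivity)]
    rw [h4']; ring

end Aux3

set_option maxHeartbeats 1000000 in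
theorem stmt18 (D : ℕ)
    (hD2 : 2 ≤ D) (hsq : Squarefree D)
    (p q : ℤ → ℤ)
    (hpm1 : p (-1) = 1) (hqm1 : q (-1) = 0)
    (hp0 : p 0 = ⌈(uD D 0 : ℚ) / 2⌉) (hq0 : q 0 = 1)
    (hprec : ∀ i : ℤ, -1 ≤ i → p (i + 2) = uD D (i + 2).toNat * p (i + 1) + p i)
    (hqrec : ∀ i : ℤ, -1 ≤ i → q (i + 2) = uD D (i + 2).toNat * q (i + 1) + q i)
    (i r : ℤ) (hi : -1 ≤ i) (hodd : Odd i)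
    (hr1 : 1 ≤ r) (hr : r ≤ uD D (i + 2).toNat - 1) :
    (1 - 1 / (uD D (i + 2).toNat : ℝ)) * Real.sqrt (disc D) <
      ar2 D p q i r * ac2 D p q i r := by
  have hn0 : 0 ≤ i + 1 := by omega
  set n : ℕ := (i + 1).toNat with hndef
  have hni : (n : ℤ) = i + 1 := Int.toNat_of_nonneg hn0
  have htn : (i + 2).toNat = n + 1 := by omega
  rw [htn] at hr ⊢
  have hneven : Even n := by
    obtain ⟨k, hk⟩ := hodd
    exact ⟨(k + 1).toNat, by omega⟩
  -- basic positivity of u and casts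
  have hu2 : (2 : ℤ) ≤ uD D (n + 1) := by omega
  have hu2c : (2 : ℝ) ≤ (uD D (n + 1) : ℝ) := by exact_mod_cast hu2
  have huu : (0 : ℝ) < (uD D (n + 1) : ℝ) := by linarith
  have hr1c : (1 : ℝ) ≤ (r : ℝ) := by exact_mod_cast hr1
  have hrc : (r : ℝ) ≤ (uD D (n + 1) : ℝ) - 1 := by
    have : (r : ℝ) ≤ ((uD D (n + 1) - 1 : ℤ) : ℝ) := by exact_mod_cast hr
    push_cast at this; linarith
  have hgu : (uD D (n + 1) : ℝ) < gam D (n + 1) := gam_gt_uD hD2 hsq (n + 1)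
  -- facts about ac
  have hE := acE p q hD2 hsq hpm1 hqm1 hp0 hq0 hprec hqrec n
  rw [show (n : ℤ) - 1 = i by omega, hni] at hE
  have hsig := ac_sign p q hD2 hsq hpm1 hqm1 hp0 hq0 hprec hqrec (n + 1)
  rw [show ((n + 1 : ℕ) : ℤ) - 1 = i + 1 by omega] at hsig
  have hpow : (-1 : ℝ) ^ (n + 1) = -1 := by
    rw [pow_succ, hneven.neg_one_pow]; ring
  rw [hpow] at hsig
  have hac1 : ac D p q (i + 1) < 0 := by nlinarith
  have hdz := detpq p q hpm1 hqm1 hq0 hprec hqrec n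
  rw [hneven.neg_one_pow, show (n : ℤ) - 1 = i by omega, hni] at hdz
  have hdet : (q (i + 1) : ℝ) * ac D p q i - (q i : ℝ) * ac D p q (i + 1) = 1 := by
    have h1 : ((q (i + 1) * p i - q i * p (i + 1) : ℤ) : ℝ) = 1 := by exact_mod_cast hdz
    unfold ac
    push_cast at h1 ⊢
    linear_combination h1
  obtain ⟨hB0, hA1⟩ := q_pos q hD2 hsq hqm1 hq0 hqrec n
  rw [show (n : ℤ) - 1 = i by omega] at hB0
  rw [hni] at hA1
  have hB0c : (0 : ℝ) ≤ (q i : ℝ) := by exact_mod_cast hB0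
  have hA1c : (1 : ℝ) ≤ (q (i + 1) : ℝ) := by exact_mod_cast hA1
  -- abbreviations
  set g : ℝ := gam D (n + 1) with hgdef
  set uu : ℝ := (uD D (n + 1) : ℝ) with huudef
  set A : ℝ := (q (i + 1) : ℝ) with hAdef
  set B : ℝ := (q i : ℝ) with hBdef
  set e1 : ℝ := ac D p q (i + 1) with he1def
  set rr : ℝ := (r : ℝ) with hrrdef
  -- delta identity
  have hδeq : (-e1) * (g * A + B) = 1 := by
    rw [hE] at hdet
    linear_combination hdet
  have hδ : 0 < -e1 := by linarith
  have hgAB : 0 < g * A + B := by nlinarith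
  have hδval : -e1 = 1 / (g * A + B) := by
    rw [eq_div_iff (ne_of_gt hgAB)]
    exact hδeq
  -- ac2 and ar2 values
  have hac2val : ac2 D p q i r = (g - rr) * (-e1) := by
    unfold ac2
    rw [hE, ← he1def, ← hrrdef]; ring
  have hac2pos : 0 < ac2 D p q i r := by
    rw [hac2val]
    apply mul_pos _ hδ
    linarith
  have har2val : ar2 D p q i r = ac2 D p q i r + (B + rr * A) * Real.sqrt (disc D) := by
    unfold ar2 ac2
    rw [ar_eq_ac p q hD2 i, ar_eq_ac p q hD2 (i + 1), ← he1def, ← hAdef, ← hBdef,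
      ← hrrdef]
    ring
  have hsd : 0 < Real.sqrt (disc D) := sqrt_disc_pos hD2
  -- the key inequality
  have hkey : (uu - 1) / uu < ac2 D p q i r * (B + rr * A) := by
    rw [div_lt_iff₀ huu, hac2val, hδval,
      show (g - rr) * (1 / (g * A + B)) * (B + rr * A) * uu
        = ((g - rr) * (B + rr * A) * uu) / (g * A + B) by ring,
      lt_div_iff₀ hgAB]
    nlinarith [mul_nonneg huu.le (mul_nonneg (by linarith : (0:ℝ) ≤ rr - 1)
        (mul_nonneg (by linarith : (0:ℝ) ≤ uu - 1 - rr) (by linarith : (0:ℝ) ≤ A))),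
      mul_pos (by linarith : (0:ℝ) < g - uu) (by linarith : (0:ℝ) < A),
      mul_nonneg huu.le (mul_nonneg (by linarith : (0:ℝ) ≤ g - uu)
        (mul_nonneg (by linarith : (0:ℝ) ≤ rr - 1) (by linarith : (0:ℝ) ≤ A))),
      mul_nonneg huu.le (mul_nonneg (by linarith : (0:ℝ) ≤ g - rr - 1) hB0c),
      hB0c]
  have h1u : 1 - 1 / uu = (uu - 1) / uu := by field_simp
  calc (1 - 1 / uu) * Real.sqrt (disc D)
      = ((uu - 1) / uu) * Real.sqrt (disc D) := by rw [h1u]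
    _ < (ac2 D p q i r * (B + rr * A)) * Real.sqrt (disc D) :=
        mul_lt_mul_of_pos_right hkey hsd
    _ ≤ ac2 D p q i r * ac2 D p q i r
        + ac2 D p q i r * ((B + rr * A) * Real.sqrt (disc D)) := by
        nlinarith [mul_pos hac2pos hac2pos]
    _ = ar2 D p q i r * ac2 D p q i r := by rw [har2val]; ring
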